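/- Let 1 ≤ p_1 ≤ ... ≤ p_d ≤ n and let G_0 be the d-uniform d-partite hypergraph with vertex classes V_1,...,V_d each labeled by [n], containing exactly those edges (x_1,...,x_d) ∈ [n]^d for which x_{(i)} < p_i for some i. Then G_0 is weakly K^d_{p_1,...,p_d}-saturated. Consequently W_n(p_1,...,p_d) ≤ n^d − q_n(p_1,...,p_d). -/

import Mathlib

/-- The `i`-th smallest entry (with multiplicity) of the tuple `x`. -/
def sortedNth {d : ℕ} (x : Fin d → ℕ) (i : Fin d) : ℕ :=
  x (Tuple.sort x i)

/-- The `d`-tuples with entries in `[n] = {1,…,n}`. -/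
def tuples (n d : ℕ) : Finset (Fin d → ℕ) :=
  Fintype.piFinset fun _ => Finset.Icc 1 n

/-- `q_n(p_1,…,p_d)`: the number of `x ∈ [n]^d` whose `i`-th smallest
entry is at least `p_i` for every `i`. -/
def qn (n d : ℕ) (p : Fin d → ℕ) : ℕ :=
  ((tuples n d).filter fun x => ∀ i, p i ≤ sortedNth x i).card

/-- The labels (in `{1,…,n}`) of the vertices of the edge `v`. -/
def edgeLabels {n d : ℕ} (v : Fin d → Fin n) : Fin d → ℕ := fun i => (v i).val + 1

/-- The classes `S_1,…,S_d` span a copy of `K^d_{p_1,…,p_d}` in some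
orientation: for some permutation `π`, `|S_i| = p_{π(i)}`. -/
def IsBox {n d : ℕ} (p : Fin d → ℕ) (S : Fin d → Finset (Fin n)) : Prop :=
  ∃ π : Equiv.Perm (Fin d), ∀ i, (S i).card = p (π i)

/-- A `d`-uniform `d`-partite hypergraph with `n` vertices per class, given
by its edge set `E ⊆ V_1 × ⋯ × V_d`, is weakly `K^d_{p_1,…,p_d}`-saturated
if its non-edges can be ordered as a list `l` so that each newly added edge
lies in a copy of `K^d_{p_1,…,p_d}` (in any orientation) all of whose edges
are already present. -/
def WeakSatHyp (n d : ℕ) (p : Fin d → ℕ) (E : Finset (Fin d → Fin n)) : Prop :=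
  ∃ l : List (Fin d → Fin n), l.Nodup ∧ (∀ e, e ∈ l ↔ e ∉ E) ∧
    ∀ k : Fin l.length, ∃ S : Fin d → Finset (Fin n),
      IsBox p S ∧ l.get k ∈ Fintype.piFinset S ∧
      Fintype.piFinset S ⊆ E ∪ (l.take (k + 1)).toFinset

/-- The hypergraph `G_0` whose edges are the tuples `x ∈ [n]^d` with
`x_{(i)} < p_i` for some `i`. -/
def G0 (n d : ℕ) (p : Fin d → ℕ) : Finset (Fin d → Fin n) :=
  Finset.univ.filter fun v => ∃ i, sortedNth (edgeLabels v) i < p i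

/-- `W_n(p_1,…,p_d)`: the minimum number of edges of a weakly
`K^d_{p_1,…,p_d}`-saturated `d`-uniform `d`-partite hypergraph with `n`
vertices per class. -/
noncomputable def WHyp (n d : ℕ) (p : Fin d → ℕ) : ℕ :=
  sInf {m | ∃ E : Finset (Fin d → Fin n), WeakSatHyp n d p E ∧ E.card = m}

/-- Weight of an edge: sum of coordinate values. -/
def wt {n d : ℕ} (v : Fin d → Fin n) : ℕ := ∑ i, (v i : ℕ)

theorem G0_weakly_saturated (n d : ℕ) (p : Fin d → ℕ) (hmono : Monotone p)
    (hp1 : ∀ i, 1 ≤ p i) (hpn : ∀ i, p i ≤ n) :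
    WeakSatHyp n d p (G0 n d p) ∧ WHyp n d p ≤ n ^ d - qn n d p := by
  classical
  set E := G0 n d p with hE
  have hnotE : ∀ v : Fin d → Fin n, v ∉ E ↔ ∀ i, p i ≤ sortedNth (edgeLabels v) i := by
    intro v
    simp [hE, G0, not_exists, not_lt]
  set r : (Fin d → Fin n) → (Fin d → Fin n) → Prop := fun a b => wt a ≤ wt b with hr
  haveI : IsTotal (Fin d → Fin n) r := ⟨fun a b => Nat.le_total _ _⟩
  haveI : IsTrans (Fin d → Fin n) r := ⟨fun a b c => Nat.le_trans⟩
  set l := List.insertionSort r Eᶜ.toList with hl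
  have hperm : l.Perm Eᶜ.toList := List.perm_insertionSort r Eᶜ.toList
  have hsorted : l.Pairwise r := List.pairwise_insertionSort r _
  have hnodup : l.Nodup := hperm.nodup_iff.mpr Eᶜ.nodup_toList
  have hmem : ∀ e, e ∈ l ↔ e ∉ E := fun e => by
    rw [hperm.mem_iff, Finset.mem_toList, Finset.mem_compl]
  have hws : WeakSatHyp n d p E := by
    refine ⟨l, hnodup, hmem, ?_⟩
    intro k
    set x := l.get k with hx
    have hxE : x ∉ E := (hmem x).mp (l.get_mem _)
    have hxp : ∀ i, p i ≤ sortedNth (edgeLabels x) i := (hnotE x).mp hxE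
    set σ := Tuple.sort (edgeLabels x) with hσ
    have hq : ∀ j, p (σ⁻¹ j) ≤ (x j).val + 1 := by
      intro j
      have h := hxp (σ⁻¹ j)
      simp only [sortedNth, ← hσ, Equiv.Perm.inv_def, Equiv.apply_symm_apply, edgeLabels] at h
      exact h
    have hq1 : ∀ j, 1 ≤ p (σ⁻¹ j) := fun j => hp1 _
    have hlt : ∀ j, (x j).val + 1 - p (σ⁻¹ j) < n := by
      intro j
      have := (x j).isLt
      have := hq1 j
      omega
    set a : ∀ _ : Fin d, Fin n := fun j => ⟨(x j).val + 1 - p (σ⁻¹ j), hlt j⟩ with ha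
    set S : Fin d → Finset (Fin n) := fun j => Finset.Icc (a j) (x j) with hS
    have haj : ∀ j, a j ≤ x j := by
      intro j
      have := hq1 j
      simp only [ha, Fin.le_def]
      omega
    have hcard : ∀ j, (S j).card = p (σ⁻¹ j) := by
      intro j
      rw [hS]
      simp only [Fin.card_Icc, ha]
      have := hq j
      omega
    refine ⟨S, ⟨σ⁻¹, fun i => hcard i⟩, ?_, ?_⟩
    · rw [Fintype.mem_piFinset]
      intro j
      rw [hS, Finset.mem_Icc]
      exact ⟨haj j, le_refl _⟩
    · intro y hy
      rw [Fintype.mem_piFinset] at hy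
      have hyle : ∀ j, (y j : ℕ) ≤ (x j : ℕ) := by
        intro j
        have := hy j
        rw [hS, Finset.mem_Icc, Fin.le_def, Fin.le_def] at this
        exact this.2
      by_cases hyE : y ∈ E
      · exact Finset.mem_union_left _ hyE
      rw [Finset.mem_union]
      right
      rw [List.mem_toFinset]
      by_cases hyx : y = x
      · subst hyx
        have hk1 : (k : ℕ) < (l.take ((k : ℕ) + 1)).length := by
          rw [List.length_take]
          exact lt_min (Nat.lt_succ_self _) k.isLt
        have : (l.take ((k : ℕ) + 1))[(k : ℕ)] = l[(k : ℕ)] := List.getElem_take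
        rw [hx]
        rw [List.get_eq_getElem, ← this]
        exact List.getElem_mem hk1
      · have hwlt : wt y < wt x := by
          have hne : ∃ j, y j ≠ x j := by
            by_contra h
            push_neg at h
            exact hyx (funext h)
          obtain ⟨j, hj⟩ := hne
          refine Finset.sum_lt_sum (fun i _ => hyle i) ⟨j, Finset.mem_univ j, ?_⟩
          exact lt_of_le_of_ne (hyle j) (fun h => hj (Fin.ext h))
        have hyl : y ∈ l := (hmem y).mpr hyE
        obtain ⟨j, hj⟩ := List.mem_iff_get.mp hyl
        have hjk : (j : ℕ) ≤ (k : ℕ) := by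
          by_contra h
          push_neg at h
          have := hsorted.rel_get_of_lt (a := k) (b := j) h
          rw [hj, ← hx] at this
          exact absurd this (not_le.mpr hwlt)
        have hj1 : (j : ℕ) < (l.take ((k : ℕ) + 1)).length := by
          rw [List.length_take]
          exact lt_min (Nat.lt_succ_of_le hjk) j.isLt
        have heq : (l.take ((k : ℕ) + 1))[(j : ℕ)] = l[(j : ℕ)] := List.getElem_take
        have : (l.take ((k : ℕ) + 1))[(j : ℕ)] = y := by
          rw [heq, ← List.get_eq_getElem, hj]
        rw [← this]
        exact List.getElem_mem hj1
  refine ⟨hws, ?_⟩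
  have hcompl : Eᶜ.card = qn n d p := by
    rw [qn]
    refine Finset.card_bij (fun v _ => edgeLabels v) ?_ ?_ ?_
    · intro v hv
      rw [Finset.mem_compl, hnotE] at hv
      rw [Finset.mem_filter]
      refine ⟨?_, hv⟩
      rw [tuples, Fintype.mem_piFinset]
      intro i
      rw [Finset.mem_Icc]
      have := (v i).isLt
      simp [edgeLabels]
    · intro v₁ _ v₂ _ h
      funext i
      have := congrFun h i
      simp only [edgeLabels] at this
      exact Fin.ext (by omega)
    · intro x hx
      rw [Finset.mem_filter] at hx
      obtain ⟨hx1, hx2⟩ := hx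
      rw [tuples, Fintype.mem_piFinset] at hx1
      have hx1' : ∀ i, 1 ≤ x i ∧ x i ≤ n := by
        intro i
        have := hx1 i
        rwa [Finset.mem_Icc] at this
      refine ⟨fun i => ⟨x i - 1, by have := hx1' i; omega⟩, ?_, ?_⟩
      · rw [Finset.mem_compl, hnotE]
        have hel : edgeLabels (fun i => (⟨x i - 1, by have := hx1' i; omega⟩ : Fin n)) = x := by
          funext i
          simp only [edgeLabels]
          have := hx1' i
          omega
        rw [hel]
        exact hx2
      · funext i
        simp only [edgeLabels]
        have := hx1' i
        omega
  have hcardE : E.card = n ^ d - qn n d p := by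
    have h1 := Finset.card_compl E
    have h2 : Fintype.card (Fin d → Fin n) = n ^ d := by
      simp [Fintype.card_fun]
    have h3 : E.card ≤ Fintype.card (Fin d → Fin n) := Finset.card_le_univ E
    omega
  calc WHyp n d p ≤ E.card := Nat.sInf_le ⟨E, hws, rfl⟩
    _ = n ^ d - qn n d p := hcardE
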